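/- arXiv:2510.08038 — 3 statements merged into one kernel-verified Lean document; each statement's English description precedes it below -/
import Mathlib

section
/- Let τ(t) be a formal power series in t = (t_1, t_2, ...) with τ(0) invertible, and suppose the wave function ψ(t, x) = (τ(t - [x^{-1}])/τ(t)) e^{ξ(t,x)} satisfies the differential Fay identity: (x - z)(τ(t - [x^{-1}] - [z^{-1}])τ(t) - τ(t - [x^{-1}])τ(t - [z^{-1}])) = ∂τ(t - [x^{-1}])·τ(t - [z^{-1}]) - ∂τ(t - [z^{-1}])·τ(t - [x^{-1}]), where ∂ = ∂/∂t_1. Then ψ(t - [x^{-1}], z)/ψ(t, z) = x^{-1} ∂ log(ψ(t, x)/ψ(t, z)). -/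
/-- Differential Fay identity ⟹ the Bäcklund–Darboux relation for wave functions.

We work abstractly in a (commutative) field `R` containing all the quantities
involved, equipped with a derivation `d` (playing the role of `∂ = ∂/∂t_1`):
* `a = τ(t)`, `ax = τ(t - [x⁻¹])`, `az = τ(t - [z⁻¹])`, `axz = τ(t - [x⁻¹] - [z⁻¹])`;
* `ex = e^{ξ(t,x)}`, `ez = e^{ξ(t,z)}`, so that `d ex = x·ex`, `d ez = z·ez`, and
  `e^{ξ(t - [x⁻¹], z)} = (1 - z/x)·ez`;
* the wave functions are `ψ(t,x) = (ax/a)·ex`, `ψ(t,z) = (az/a)·ez`, and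
  `ψ(t - [x⁻¹], z) = (axz/ax)·((1 - z/x)·ez)`.

Assuming the differential Fay identity
`(x - z)(axz·a - ax·az) = d(ax)·az - d(az)·ax`, we conclude
`ψ(t - [x⁻¹], z)/ψ(t, z) = x⁻¹·∂ log(ψ(t,x)/ψ(t,z))`,
where `∂ log u = d u / u`. -/
theorem stmt_10 (R : Type) [Field R] (d : R → R)
    (hadd : ∀ u v : R, d (u + v) = d u + d v)
    (hmul : ∀ u v : R, d (u * v) = u * d v + v * d u)
    (x z a ax az axz ex ez : R)
    (hx : x ≠ 0) (hxz : x ≠ z)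
    (ha : a ≠ 0) (hax : ax ≠ 0) (haz : az ≠ 0) (hex : ex ≠ 0) (hez : ez ≠ 0)
    (hdex : d ex = x * ex) (hdez : d ez = z * ez)
    (fay : (x - z) * (axz * a - ax * az) = d ax * az - d az * ax) :
    (axz / ax * ((1 - z / x) * ez)) / (az / a * ez) =
      x⁻¹ * (d (ax / a * ex) / (ax / a * ex) - d (az / a * ez) / (az / a * ez)) := by
  have h1 : (ax / a * ex) * a = ax * ex := by field_simp
  have h2 := hmul (ax / a * ex) a
  rw [h1, hmul] at h2
  have h3 : (az / a * ez) * a = az * ez := by field_simp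
  have h4 := hmul (az / a * ez) a
  rw [h3, hmul] at h4
  have kx : d (ax / a * ex) = (ax * d ex + ex * d ax - ax / a * ex * d a) / a := by
    rw [eq_div_iff ha]; linear_combination -h2
  have kz : d (az / a * ez) = (az * d ez + ez * d az - az / a * ez * d a) / a := by
    rw [eq_div_iff ha]; linear_combination -h4
  have rx : d (ax / a * ex) / (ax / a * ex) = x + d ax / ax - d a / a := by
    rw [kx, hdex]; field_simp
  have rz : d (az / a * ez) / (az / a * ez) = z + d az / az - d a / a := by
    rw [kz, hdez]; field_simp
  rw [rx, rz]
  field_simp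
  linear_combination a * fay
end

section
/- For a pseudo-differential operator A = ∑ a_i ∂^{-i} over the differential ring of formal power series, define res A := a_{-1} (the coefficient of ∂^{-1}). Then for any function (multiplication operator) Φ invertible and any differential operator Q (one with only nonnegative powers of ∂): res(∂ ∘ Φ^{-1} ∘ Q ∘ Φ ∘ ∂^{-1}) = ∂(Φ^{-1} · Q(Φ)), where Q(Φ) denotes the application of the differential operator Q to Φ. -/
/-! Formal pseudo-differential operators `∑_{j ≤ N} a_j ∂^j` over a commutative
differential ℚ-algebra `R`: coefficient functions `ℤ → R` whose support is
bounded above.  The coefficient of `∂^n` in `(∑ a_i ∂^i)∘(∑ b_j ∂^j)` is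
`∑_{m≥0, i} C(i,m)·a_i·d^m(b_{n+m-i})`, where `C(i,m)` is the generalized
binomial coefficient. -/

structure PDO (R : Type) [CommRing R] where
  coeff : ℤ → R
  bdd : ∃ N : ℤ, ∀ n : ℤ, N < n → coeff n = 0

namespace PDO

variable {R : Type} [CommRing R] [Algebra ℚ R]

instance : Zero (PDO R) := ⟨⟨fun _ => 0, ⟨0, fun _ _ => rfl⟩⟩⟩

instance : One (PDO R) :=
  ⟨⟨fun n => if n = 0 then 1 else 0, ⟨0, fun n hn => if_neg (by omega)⟩⟩⟩

instance : Add (PDO R) :=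
  ⟨fun A B => ⟨fun n => A.coeff n + B.coeff n, by
    obtain ⟨Na, hA⟩ := A.bdd; obtain ⟨Nb, hB⟩ := B.bdd
    exact ⟨max Na Nb, fun n hn => by
      show A.coeff n + B.coeff n = 0
      rw [hA n (by omega), hB n (by omega), add_zero]⟩⟩⟩

instance : Neg (PDO R) :=
  ⟨fun A => ⟨fun n => -A.coeff n, by
    obtain ⟨Na, hA⟩ := A.bdd
    exact ⟨Na, fun n hn => by show -A.coeff n = 0; rw [hA n hn, neg_zero]⟩⟩⟩

instance : Sub (PDO R) := ⟨fun A B => A + -B⟩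

/-- Generalized binomial coefficient `C(n, m) = n(n-1)⋯(n-m+1)/m!` for `n : ℤ`. -/
noncomputable def qchoose (n : ℤ) (m : ℕ) : ℚ :=
  (∏ j ∈ Finset.range m, ((n : ℚ) - (j : ℚ))) / (m.factorial : ℚ)

theorem iterate_d_zero (d : Derivation ℚ R R) (m : ℕ) : (⇑d)^[m] (0 : R) = 0 := by
  induction m with
  | zero => rfl
  | succ m ih => rw [Function.iterate_succ_apply', ih, map_zero]

/-- Composition of pseudo-differential operators (depends on the derivation `d`). -/
noncomputable def mul (d : Derivation ℚ R R) (A B : PDO R) : PDO R where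
  coeff n := ∑ᶠ (m : ℕ) (i : ℤ),
    algebraMap ℚ R (qchoose i m) * A.coeff i * (⇑d)^[m] (B.coeff (n + m - i))
  bdd := by
    obtain ⟨Na, hA⟩ := A.bdd; obtain ⟨Nb, hB⟩ := B.bdd
    refine ⟨Na + Nb, fun n hn => ?_⟩
    refine finsum_eq_zero_of_forall_eq_zero fun m =>
      finsum_eq_zero_of_forall_eq_zero fun i => ?_
    by_cases h : i ≤ Na
    · rw [hB (n + m - i) (by omega), iterate_d_zero, mul_zero]
    · rw [hA i (by omega), mul_zero, zero_mul]

/-- Formal adjoint: `(∑ a_i ∂^i)† = ∑ (-∂)^i ∘ a_i`; its coefficient of `∂^n`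
is `∑_{m≥0} (-1)^{n+m} C(n+m, m)·d^m(a_{n+m})`. -/
noncomputable def dagger (d : Derivation ℚ R R) (A : PDO R) : PDO R where
  coeff n := ∑ᶠ m : ℕ,
    algebraMap ℚ R ((-1 : ℚ) ^ (n + (m : ℤ)) * qchoose (n + m) m) * (⇑d)^[m] (A.coeff (n + m))
  bdd := by
    obtain ⟨Na, hA⟩ := A.bdd
    refine ⟨Na, fun n hn => ?_⟩
    refine finsum_eq_zero_of_forall_eq_zero fun m => ?_
    rw [hA (n + m) (by omega), iterate_d_zero, mul_zero]

/-- The differential-operator part `A_+` (nonnegative powers of `∂`). -/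
def pos (A : PDO R) : PDO R :=
  ⟨fun n => if 0 ≤ n then A.coeff n else 0, by
    obtain ⟨Na, hA⟩ := A.bdd
    exact ⟨Na, fun n hn => by show (if 0 ≤ n then A.coeff n else 0) = 0; rw [hA n hn, ite_self]⟩⟩

/-- The strictly negative part `A_-`. -/
def negPart (A : PDO R) : PDO R :=
  ⟨fun n => if n < 0 then A.coeff n else 0, ⟨0, fun n hn => if_neg (by omega)⟩⟩

/-- The multiplication operator by `a ∈ R`, as a pseudo-differential operator. -/
def ofFun (a : R) : PDO R := ⟨fun n => if n = 0 then a else 0, ⟨0, fun n hn => if_neg (by omega)⟩⟩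

/-- The operator `∂`. -/
def del : PDO R := ⟨fun n => if n = 1 then 1 else 0, ⟨1, fun n hn => if_neg (by omega)⟩⟩

/-- The operator `∂⁻¹`. -/
def delInv : PDO R := ⟨fun n => if n = -1 then 1 else 0, ⟨0, fun n hn => if_neg (by omega)⟩⟩

/-- The residue: coefficient of `∂⁻¹`. -/
def res (A : PDO R) : R := A.coeff (-1)

/-- Application of a differential operator `Q = ∑_{n≥0} q_n ∂^n` to `Φ ∈ R`. -/
noncomputable def applyOp (d : Derivation ℚ R R) (Q : PDO R) (Φ : R) : R :=
  ∑ᶠ n : ℕ, Q.coeff (n : ℤ) * (⇑d)^[n] Φ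


theorem qchoose_eq_zero {i : ℤ} {m : ℕ} (h0 : 0 ≤ i) (h : i < m) : qchoose i m = 0 := by
  unfold qchoose
  rw [Finset.prod_eq_zero (i := i.toNat) (by simp; omega)
    (by rw [sub_eq_zero]; exact_mod_cast (Int.toNat_of_nonneg h0).symm), zero_div]

theorem prod_add_one (m : ℕ) : ∏ j ∈ Finset.range m, ((j : ℚ) + 1) = m.factorial := by
  induction m with
  | zero => simp
  | succ m ih => rw [Finset.prod_range_succ, ih, Nat.factorial_succ]; push_cast; ring

theorem qchoose_self (m : ℕ) : qchoose (m : ℤ) m = 1 := by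
  unfold qchoose
  rw [div_eq_one_iff_eq (by exact_mod_cast m.factorial_ne_zero)]
  rw [← Finset.prod_range_reflect]
  have h1 : ∀ j ∈ Finset.range m, (((m : ℤ) : ℚ) - ((m - 1 - j : ℕ) : ℚ)) = ((j : ℚ) + 1) := by
    intro j hj
    simp only [Finset.mem_range] at hj
    rw [Nat.cast_sub (show j ≤ m - 1 by omega), Nat.cast_sub (show 1 ≤ m by omega)]
    push_cast
    ring
  rw [Finset.prod_congr rfl h1, prod_add_one]

theorem coeff_mul (d : Derivation ℚ R R) (A B : PDO R) (n : ℤ) :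
    (mul d A B).coeff n = ∑ᶠ (m : ℕ) (i : ℤ),
      algebraMap ℚ R (qchoose i m) * A.coeff i * (⇑d)^[m] (B.coeff (n + m - i)) := rfl

theorem ofFun_mul (d : Derivation ℚ R R) (a : R) (B : PDO R) (n : ℤ) :
    (mul d (ofFun a) B).coeff n = a * B.coeff n := by
  rw [coeff_mul]
  have h1 : ∀ m : ℕ, (∑ᶠ i : ℤ, algebraMap ℚ R (qchoose i m) * (ofFun a).coeff i *
        (⇑d)^[m] (B.coeff (n + m - i)))
      = algebraMap ℚ R (qchoose 0 m) * a * (⇑d)^[m] (B.coeff (n + m)) := by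
    intro m
    rw [finsum_eq_single _ (0 : ℤ) (fun i hi => by
      show _ * (if i = 0 then a else 0) * _ = 0
      rw [if_neg hi, mul_zero, zero_mul])]
    show _ * (if (0:ℤ) = 0 then a else 0) * (⇑d)^[m] (B.coeff (n + m - 0)) = _
    rw [if_pos rfl, sub_zero]
  rw [finsum_congr h1]
  rw [finsum_eq_single _ (0 : ℕ) (fun m hm => by
    rw [qchoose_eq_zero le_rfl (by exact_mod_cast Nat.pos_of_ne_zero hm), map_zero,
      zero_mul, zero_mul])]
  simp [qchoose]

theorem coeff_QPhi (d : Derivation ℚ R R) (Q : PDO R) (Φ : R) (n : ℤ) :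
    (mul d Q (mul d (ofFun Φ) delInv)).coeff n =
      ∑ᶠ m : ℕ, algebraMap ℚ R (qchoose (n + m + 1) m) * Q.coeff (n + m + 1) * (⇑d)^[m] Φ := by
  rw [coeff_mul]
  have hB : ∀ k : ℤ, (mul d (ofFun Φ) delInv).coeff k = if k = -1 then Φ else 0 := by
    intro k
    rw [ofFun_mul]
    show Φ * (if k = -1 then 1 else 0) = _
    split <;> simp
  refine finsum_congr fun m => ?_
  rw [finsum_eq_single _ (n + m + 1) (fun i hi => by
    rw [hB, if_neg (by omega), iterate_d_zero, mul_zero])]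
  rw [hB, if_pos (by omega)]

end PDO

open PDO in
/-- For invertible `Φ` and a differential operator `Q` (only nonnegative powers
of `∂`): `res(∂ ∘ Φ⁻¹ ∘ Q ∘ Φ ∘ ∂⁻¹) = ∂(Φ⁻¹ · Q(Φ))`. -/
theorem stmt_15 {R : Type} [CommRing R] [Algebra ℚ R] (d : Derivation ℚ R R)
    (Q : PDO R) (hQ : ∀ n : ℤ, n < 0 → Q.coeff n = 0) (Φ : R) (hΦ : IsUnit Φ) :
    res (mul d del (mul d (ofFun (Ring.inverse Φ)) (mul d Q (mul d (ofFun Φ) delInv)))) =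
      d (Ring.inverse Φ * applyOp d Q Φ) := by
  set C := mul d Q (mul d (ofFun Φ) delInv) with hC
  have hC2 : C.coeff (-2) = 0 := by
    rw [hC, coeff_QPhi]
    refine finsum_eq_zero_of_forall_eq_zero fun m => ?_
    by_cases hm : m = 0
    · subst hm
      rw [hQ _ (by norm_num), mul_zero, zero_mul]
    · rw [qchoose_eq_zero (by omega) (by omega), map_zero, zero_mul, zero_mul]
  have hC1 : C.coeff (-1) = applyOp d Q Φ := by
    rw [hC, coeff_QPhi, applyOp]
    refine finsum_congr fun m => ?_
    have h : (-1 : ℤ) + m + 1 = m := by ring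
    rw [h, qchoose_self, map_one, one_mul]
  set B := mul d (ofFun (Ring.inverse Φ)) C with hB
  show (mul d del B).coeff (-1) = _
  rw [coeff_mul]
  have h1 : ∀ m : ℕ, (∑ᶠ i : ℤ, algebraMap ℚ R (qchoose i m) * del.coeff i *
        (⇑d)^[m] (B.coeff (-1 + m - i)))
      = algebraMap ℚ R (qchoose 1 m) * (⇑d)^[m] (B.coeff (-1 + m - 1)) := by
    intro m
    rw [finsum_eq_single _ (1 : ℤ) (fun i hi => by
      show _ * (if i = 1 then (1:R) else 0) * _ = 0
      rw [if_neg hi, mul_zero, zero_mul])]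
    show _ * (if (1:ℤ) = 1 then (1:R) else 0) * _ = _
    rw [if_pos rfl, mul_one]
  rw [finsum_congr h1]
  rw [finsum_eq_finset_sum_of_support_subset _ (s := ({0, 1} : Finset ℕ)) (fun m hm => by
    simp only [Function.mem_support] at hm
    simp only [Finset.coe_insert, Finset.coe_singleton, Set.mem_insert_iff,
      Set.mem_singleton_iff]
    by_contra h
    push_neg at h
    exact hm (by rw [qchoose_eq_zero (by norm_num) (by omega), map_zero, zero_mul]))]
  rw [Finset.sum_insert (by norm_num), Finset.sum_singleton]
  have e0 : B.coeff (-1 + (0:ℕ) - 1) = 0 := by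
    rw [hB, show (-1 + ((0:ℕ):ℤ) - 1) = -2 by norm_num, ofFun_mul, hC2, mul_zero]
  have e1 : B.coeff (-1 + (1:ℕ) - 1) = Ring.inverse Φ * applyOp d Q Φ := by
    rw [hB, show (-1 + ((1:ℕ):ℤ) - 1) = -1 by norm_num, ofFun_mul, hC1]
  rw [e0, e1]
  have q0 : qchoose 1 0 = 1 := by simp [qchoose]
  have q1 : qchoose 1 1 = 1 := by norm_num [qchoose]
  rw [q0, q1, map_one, one_mul, one_mul]
  simp
end

section
/- The operator α_n := ∑_{i ∈ ℤ} θ_i ∘ θ†_{i+n} (for n ≠ 0) acts on basis wedges of the fermionic Fock space by α_n(z^{a_1} ∧ z^{a_2} ∧ ⋯) = ∑_{j≥1} z^{a_1} ∧ ⋯ ∧ z^{a_j - n} ∧ ⋯, where the sum has only finitely many nonzero terms in each graded piece. -/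
noncomputable section
open Classical

/-! The fermionic Fock space, modelled via "Maya diagrams": a basis wedge
`z^{a_1} ∧ z^{a_2} ∧ ⋯` (with `a_1 > a_2 > ⋯` admissible) is encoded by the
set `S = {a_1, a_2, ...} ⊆ ℤ`, which contains all sufficiently small integers
and no sufficiently large ones.  Under this encoding, `θ_a` prepends `z^a`
(and re-sorts, with sign `(-1)^{#{t ∈ S | t > a}}`), and `θ†_a` deletes `z^a`
with sign `(-1)^{j-1}` where `j - 1 = #{t ∈ S | t > a}` is the number of
factors preceding `z^a`. -/

/-- Admissible index sets (images of admissible decreasing sequences). -/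
def Adm : Type :=
  {S : Set ℤ // ∃ A B : ℤ, (∀ m : ℤ, m < A → m ∈ S) ∧ (∀ m : ℤ, B < m → m ∉ S)}

/-- The fermionic Fock space: formal `ℚ`-linear combinations of basis wedges. -/
abbrev Fock : Type := Adm →₀ ℚ

/-- The sign `(-1)^{#{t ∈ S | t > a}}` arising from moving `z^a` past the
factors `z^t`, `t ∈ S`, `t > a`. -/
def wsign (S : Set ℤ) (a : ℤ) : ℚ := (-1) ^ ({t : ℤ | t ∈ S ∧ a < t}.ncard)

/-- `θ_a` on a basis wedge: prepend `z^a` and sort. -/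
def theta (a : ℤ) (S : Adm) : Fock :=
  if a ∈ S.1 then 0 else
    wsign S.1 a • Finsupp.single ⟨insert a S.1, by
      obtain ⟨A, B, h1, h2⟩ := S.2
      refine ⟨min A a, max B a, fun m hm => Set.mem_insert_iff.2 (Or.inr (h1 m (by omega))),
        fun m hm => ?_⟩
      simp only [Set.mem_insert_iff, not_or]
      exact ⟨by omega, h2 m (by omega)⟩⟩ 1

/-- `θ†_a` on a basis wedge: delete `z^a` (with sign), or `0` if absent. -/
def thetaDag (a : ℤ) (S : Adm) : Fock :=
  if a ∈ S.1 then
    wsign S.1 a • Finsupp.single ⟨S.1 \ {a}, by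
      obtain ⟨A, B, h1, h2⟩ := S.2
      refine ⟨min A a, B, fun m hm => ⟨h1 m (by omega), ?_⟩, fun m hm hc => h2 m hm hc.1⟩
      simp only [Set.mem_singleton_iff]
      omega⟩ 1
  else 0

/-- Linear extension of `θ_a` to the Fock space. -/
def thetaL (a : ℤ) (v : Fock) : Fock := v.sum fun S c => c • theta a S

/-- `α_n = ∑_{i ∈ ℤ} θ_i ∘ θ†_{i+n}` applied to a basis wedge. -/
def alphaOp (n : ℤ) (S : Adm) : Fock := ∑ᶠ i : ℤ, thetaL i (thetaDag (i + n) S)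

/-- The term of index `s ∈ S` (i.e. position `j` with `s = a_j`) of
`∑_{j≥1} z^{a_1} ∧ ⋯ ∧ z^{a_j - n} ∧ ⋯`: replace `s` by `s - n` in place;
the wedge vanishes if `s - n` already occurs, and otherwise sorting it
contributes the sign `(-1)^{#{t ∈ S, strictly between s - n and s}}`. -/
def moveTerm (n : ℤ) (S : Adm) (s : ℤ) : Fock :=
  if s ∈ S.1 then
    (if s - n ∈ S.1 then 0 else
      ((-1 : ℚ) ^ ({t : ℤ | t ∈ S.1 ∧ min (s - n) s < t ∧ t < max (s - n) s}.ncard)) •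
        Finsupp.single ⟨insert (s - n) (S.1 \ {s}), by
          obtain ⟨A, B, h1, h2⟩ := S.2
          refine ⟨min (min A (s - n)) s, max B (s - n), fun m hm =>
            Set.mem_insert_iff.2 (Or.inr ⟨h1 m (by omega), by
              simp only [Set.mem_singleton_iff]; omega⟩), fun m hm => ?_⟩
          simp only [Set.mem_insert_iff, Set.mem_diff, not_or]
          exact ⟨by omega, fun hc => absurd hc.1 (h2 m (by omega))⟩⟩ 1)
  else 0


lemma gt_fin (S : Adm) (x : ℤ) : {t : ℤ | t ∈ S.1 ∧ x < t}.Finite := by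
  obtain ⟨A, B, h1, h2⟩ := S.2
  apply (Set.finite_Ioc x B).subset
  rintro t ⟨ht, hx⟩
  refine ⟨hx, ?_⟩
  by_contra h
  exact h2 t (by omega) ht

lemma between_fin (S : Adm) (x y : ℤ) : {t : ℤ | t ∈ S.1 ∧ x < t ∧ t < y}.Finite := by
  apply (Set.finite_Ioo x y).subset
  rintro t ⟨_, h1, h2⟩
  exact ⟨h1, h2⟩

lemma sign_eq (S : Adm) (i s : ℤ) (hs : s ∈ S.1) (hi : i ∉ S.1) (hne : i ≠ s) :
    wsign S.1 s * wsign (S.1 \ {s}) i =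
      (-1 : ℚ) ^ ({t : ℤ | t ∈ S.1 ∧ min i s < t ∧ t < max i s}.ncard) := by
  unfold wsign
  have hfin1 : {t : ℤ | t ∈ S.1 \ {s} ∧ i < t}.Finite := by
    apply (gt_fin S i).subset
    rintro t ⟨⟨ht, _⟩, hx⟩
    exact ⟨ht, hx⟩
  rcases lt_or_gt_of_ne hne with hlt | hgt
  · rw [min_eq_left hlt.le, max_eq_right hlt.le]
    have hsplit : {t : ℤ | t ∈ S.1 \ {s} ∧ i < t} =
        {t : ℤ | t ∈ S.1 ∧ s < t} ∪ {t : ℤ | t ∈ S.1 ∧ i < t ∧ t < s} := by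
      ext t
      simp only [Set.mem_setOf_eq, Set.mem_diff, Set.mem_singleton_iff, Set.mem_union]
      constructor
      · rintro ⟨⟨htS, hts⟩, hit⟩
        rcases lt_or_gt_of_ne hts with h | h
        · exact Or.inr ⟨htS, hit, h⟩
        · exact Or.inl ⟨htS, h⟩
      · rintro (⟨htS, h⟩ | ⟨htS, h1, h2⟩) <;> exact ⟨⟨htS, by omega⟩, by omega⟩
    have hdisj : Disjoint {t : ℤ | t ∈ S.1 ∧ s < t} {t : ℤ | t ∈ S.1 ∧ i < t ∧ t < s} := by
      rw [Set.disjoint_left]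
      rintro t ⟨_, h1⟩ ⟨_, _, h2⟩
      omega
    rw [hsplit, Set.ncard_union_eq hdisj (gt_fin S s) (between_fin S i s), pow_add,
      ← mul_assoc, ← pow_add, Even.neg_one_pow ⟨_, rfl⟩, one_mul]
  · rw [min_eq_right hgt.le, max_eq_left hgt.le]
    have heq : {t : ℤ | t ∈ S.1 \ {s} ∧ i < t} = {t : ℤ | t ∈ S.1 ∧ i < t} := by
      ext t
      simp only [Set.mem_setOf_eq, Set.mem_diff, Set.mem_singleton_iff]
      constructor
      · rintro ⟨⟨htS, _⟩, h⟩; exact ⟨htS, h⟩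
      · rintro ⟨htS, h⟩; exact ⟨⟨htS, by omega⟩, h⟩
    have hsplit : {t : ℤ | t ∈ S.1 ∧ s < t} =
        {t : ℤ | t ∈ S.1 ∧ i < t} ∪ {t : ℤ | t ∈ S.1 ∧ s < t ∧ t < i} := by
      ext t
      simp only [Set.mem_setOf_eq, Set.mem_union]
      constructor
      · rintro ⟨htS, h⟩
        rcases lt_trichotomy t i with h' | h' | h'
        · exact Or.inr ⟨htS, h, h'⟩
        · exact absurd (h' ▸ htS) hi
        · exact Or.inl ⟨htS, h'⟩
      · rintro (⟨htS, h⟩ | ⟨htS, h1, h2⟩) <;> exact ⟨htS, by omega⟩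
    have hdisj : Disjoint {t : ℤ | t ∈ S.1 ∧ i < t} {t : ℤ | t ∈ S.1 ∧ s < t ∧ t < i} := by
      rw [Set.disjoint_left]
      rintro t ⟨_, h1⟩ ⟨_, _, h2⟩
      omega
    rw [heq, hsplit, Set.ncard_union_eq hdisj (gt_fin S i) (between_fin S s i), pow_add,
      mul_comm ((-1 : ℚ) ^ {t : ℤ | t ∈ S.1 ∧ i < t}.ncard), mul_assoc, ← pow_add,
      Even.neg_one_pow ⟨_, rfl⟩, mul_one]

lemma term_eq (n : ℤ) (hn : n ≠ 0) (S : Adm) (i : ℤ) :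
    thetaL i (thetaDag (i + n) S) = moveTerm n S (i + n) := by
  by_cases h1 : i + n ∈ S.1
  · rw [thetaDag, if_pos h1, moveTerm, if_pos h1]
    have hin : i + n - n = i := by ring
    have hgen : ∀ (c : ℚ) (T : Adm), thetaL i (c • Finsupp.single T 1) = c • theta i T := by
      intro c T
      rw [thetaL, Finsupp.smul_single, smul_eq_mul, mul_one,
        Finsupp.sum_single_index (by rw [zero_smul])]
    refine (hgen _ _).trans ?_
    unfold theta
    split_ifs with h2 h3 h3
    · exact smul_zero _
    · exact (h3 (by rw [hin]; exact h2.1)).elim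
    · refine absurd ⟨?_, by simp only [Set.mem_singleton_iff]; omega⟩ h2
      rwa [hin] at h3
    · have h2' : i ∉ S.1 := fun h => h2 ⟨h, by simp only [Set.mem_singleton_iff]; omega⟩
      rw [smul_smul, sign_eq S i (i + n) h1 h2' (by omega)]
      congr 1
      · rw [hin]
      · exact congrArg (fun T : Adm => Finsupp.single T (1 : ℚ))
          (Subtype.ext (by simp only; rw [hin]))
  · rw [thetaDag, if_neg h1, moveTerm, if_neg h1, thetaL, Finsupp.sum_zero_index]

lemma move_support (n : ℤ) (S : Adm) :
    (Function.support fun s : ℤ => moveTerm n S s).Finite := by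
  obtain ⟨A, B, h1, h2⟩ := S.2
  apply (Set.finite_Icc (A + n) B).subset
  intro s hs
  simp only [Function.mem_support, moveTerm] at hs
  rw [Set.mem_Icc]
  by_cases hsS : s ∈ S.1
  · by_cases hsn : s - n ∈ S.1
    · simp [hsS, hsn] at hs
    · constructor
      · by_contra h; exact hsn (h1 _ (by omega))
      · by_contra h; exact h2 _ (by omega) hsS
  · simp [hsS] at hs

/-- For `n ≠ 0`, the operator `α_n = ∑_i θ_i θ†_{i+n}` acts on a basis wedge
`z^{a_1} ∧ z^{a_2} ∧ ⋯` by `α_n(z^{a_1} ∧ z^{a_2} ∧ ⋯) = ∑_{j≥1} z^{a_1} ∧ ⋯ ∧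
z^{a_j - n} ∧ ⋯`, and both defining sums have finite support. -/
theorem stmt_18 (n : ℤ) (hn : n ≠ 0) (S : Adm) :
    (alphaOp n S = ∑ᶠ s : ℤ, moveTerm n S s) ∧
    (Function.support fun i : ℤ => thetaL i (thetaDag (i + n) S)).Finite ∧
    (Function.support fun s : ℤ => moveTerm n S s).Finite := by
  constructor
  · rw [alphaOp, finsum_congr (term_eq n hn S)]
    exact finsum_comp (fun i => i + n) (Equiv.addRight n).bijective
  constructor
  · apply ((move_support n S).preimage (f := fun i : ℤ => i + n)
      (Function.Injective.injOn (add_left_injective n))).subset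
    intro i hi
    simp only [Function.mem_support] at hi
    simp only [Set.mem_preimage, Function.mem_support]
    rwa [← term_eq n hn S i]
  · exact move_support n S
end
end
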